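/- arXiv:1601.08145 — 2 statements merged into one kernel-verified Lean document; each statement's English description precedes it below -/
import Mathlib

section
/- Let Γ > 0 and let Δf_a ≤ Δf_b ≤ Δf_c be real numbers. Define (Λ_a, Λ_b, Λ_c) according to the four cases: (1) if 0 ≤ Δf_a, all Λ = 1; (2) if Δf_a < 0 ≤ Δf_b, Λ_a = min{1, Γ/|Δf_a|}, Λ_b = Λ_c = 1; (3) if Δf_b < 0 ≤ Δf_c, Λ_a = Λ_b = min{1, Γ/|Δf_a + Δf_b|}, Λ_c = 1; (4) if Δf_c < 0, Λ_a = Λ_b = Λ_c = min{1, Γ/|Δf_a + Δf_b + Δf_c|}. Then for all (θ_a, θ_b, θ_c) ∈ [0,Λ_a] × [0,Λ_b] × [0,Λ_c], the inequality θ_a Δf_a + θ_b Δf_b + θ_c Δf_c ≥ -Γ holds. -/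
/-- The four-case flux limiter: with Γ > 0 and ordered flux differences
Δf_a ≤ Δf_b ≤ Δf_c, the damping coefficients Λ defined case-by-case give a
cuboid on which θ_a Δf_a + θ_b Δf_b + θ_c Δf_c ≥ -Γ. -/
theorem flux_limiter_feasible
    (Γ fa fb fc : ℝ) (hΓ : 0 < Γ) (hab : fa ≤ fb) (hbc : fb ≤ fc)
    (Λa Λb Λc : ℝ)
    (hdef :
      (0 ≤ fa → Λa = 1 ∧ Λb = 1 ∧ Λc = 1) ∧
      (fa < 0 → 0 ≤ fb → Λa = min 1 (Γ / |fa|) ∧ Λb = 1 ∧ Λc = 1) ∧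
      (fb < 0 → 0 ≤ fc →
        Λa = min 1 (Γ / |fa + fb|) ∧ Λb = min 1 (Γ / |fa + fb|) ∧ Λc = 1) ∧
      (fc < 0 →
        Λa = min 1 (Γ / |fa + fb + fc|) ∧ Λb = min 1 (Γ / |fa + fb + fc|) ∧
          Λc = min 1 (Γ / |fa + fb + fc|))) :
    ∀ θa ∈ Set.Icc (0 : ℝ) Λa, ∀ θb ∈ Set.Icc (0 : ℝ) Λb,
      ∀ θc ∈ Set.Icc (0 : ℝ) Λc,
        θa * fa + θb * fb + θc * fc ≥ -Γ := by
  obtain ⟨h1, h2, h3, h4⟩ := hdef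
  rintro θa ⟨ha0, ha1⟩ θb ⟨hb0, hb1⟩ θc ⟨hc0, hc1⟩
  rcases le_or_gt 0 fa with hfa | hfa
  · have h := h1 hfa
    nlinarith [mul_nonneg ha0 hfa, mul_nonneg hb0 (hfa.trans hab),
      mul_nonneg hc0 ((hfa.trans hab).trans hbc)]
  · rcases le_or_gt 0 fb with hfb | hfb
    · obtain ⟨hA, hB, hC⟩ := h2 hfa hfb
      have habs : |fa| = -fa := abs_of_neg hfa
      have hΛ : Λa ≤ Γ / (-fa) := by rw [hA, ← habs]; exact min_le_right _ _
      have h' : Λa * (-fa) ≤ Γ := by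
        rw [← le_div_iff₀ (by linarith)]; exact hΛ
      nlinarith [mul_nonneg hb0 hfb, mul_nonneg hc0 (hfb.trans hbc),
        mul_le_mul_of_nonneg_right ha1 (le_of_lt (neg_pos.mpr hfa))]
    · rcases le_or_gt 0 fc with hfc | hfc
      · obtain ⟨hA, hB, hC⟩ := h3 hfb hfc
        have hs : fa + fb < 0 := by linarith
        have habs : |fa + fb| = -(fa + fb) := abs_of_neg hs
        have hΛ : Λa ≤ Γ / (-(fa + fb)) := by rw [hA, ← habs]; exact min_le_right _ _
        have h' : Λa * (-(fa + fb)) ≤ Γ := by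
          rw [← le_div_iff₀ (by linarith)]; exact hΛ
        have hba : θa * fa ≥ Λa * fa := by nlinarith
        have hbb : θb * fb ≥ Λb * fb := by
          rw [hB, ← hA]; nlinarith
        nlinarith [mul_nonneg hc0 hfc]
      · obtain ⟨hA, hB, hC⟩ := h4 hfc
        have hs : fa + fb + fc < 0 := by linarith
        have habs : |fa + fb + fc| = -(fa + fb + fc) := abs_of_neg hs
        have hΛ : Λa ≤ Γ / (-(fa + fb + fc)) := by
          rw [hA, ← habs]; exact min_le_right _ _
        have h' : Λa * (-(fa + fb + fc)) ≤ Γ := by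
          rw [← le_div_iff₀ (by linarith)]; exact hΛ
        have hba : θa * fa ≥ Λa * fa := by nlinarith
        have hbb : θb * fb ≥ Λb * fb := by rw [hB, ← hA]; nlinarith
        have hbcθ : θc * fc ≥ Λc * fc := by rw [hC, ← hA]; nlinarith
        nlinarith
end

section
/- With Γ > 0, flux differences Δf_a ≤ Δf_b ≤ Δf_c, and Λ's defined as in the four-case flux limiter, each Λ lies in [0,1]; in particular the limited scheme reduces to the unlimited high-order scheme (all θ = 1) whenever Δf_a + Δf_b + Δf_c ≥ -Γ and all negative flux differences individually satisfy the worst-case bound. -/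
lemma min_div_mem (Γ x : ℝ) (hΓ : 0 < Γ) :
    min 1 (Γ / |x|) ∈ Set.Icc (0 : ℝ) 1 :=
  ⟨le_min zero_le_one (div_nonneg hΓ.le (abs_nonneg x)), min_le_left _ _⟩

lemma min_div_eq_one (Γ x : ℝ) (hx : x ≠ 0) (h : |x| ≤ Γ) :
    min 1 (Γ / |x|) = 1 :=
  min_eq_left <| (one_le_div (abs_pos.mpr hx)).mpr h

/-- The flux-limiter coefficients Λ always lie in [0,1], and the limiter is
inactive (all Λ = 1) whenever the relevant worst-case bounds hold. -/
theorem flux_limiter_coeffs_in_unit_interval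
    (Γ fa fb fc : ℝ) (hΓ : 0 < Γ) (hab : fa ≤ fb) (hbc : fb ≤ fc)
    (Λa Λb Λc : ℝ)
    (hdef :
      (0 ≤ fa → Λa = 1 ∧ Λb = 1 ∧ Λc = 1) ∧
      (fa < 0 → 0 ≤ fb → Λa = min 1 (Γ / |fa|) ∧ Λb = 1 ∧ Λc = 1) ∧
      (fb < 0 → 0 ≤ fc →
        Λa = min 1 (Γ / |fa + fb|) ∧ Λb = min 1 (Γ / |fa + fb|) ∧ Λc = 1) ∧
      (fc < 0 →
        Λa = min 1 (Γ / |fa + fb + fc|) ∧ Λb = min 1 (Γ / |fa + fb + fc|) ∧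
          Λc = min 1 (Γ / |fa + fb + fc|))) :
    (Λa ∈ Set.Icc (0 : ℝ) 1 ∧ Λb ∈ Set.Icc (0 : ℝ) 1 ∧
        Λc ∈ Set.Icc (0 : ℝ) 1) ∧
      (fa < 0 → 0 ≤ fb → |fa| ≤ Γ → Λa = 1) ∧
      (fb < 0 → 0 ≤ fc → |fa + fb| ≤ Γ → Λa = 1 ∧ Λb = 1) ∧
      (fc < 0 → |fa + fb + fc| ≤ Γ → Λa = 1 ∧ Λb = 1 ∧ Λc = 1) := by
  obtain ⟨h1, h2, h3, h4⟩ := hdef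
  have one_mem : (1 : ℝ) ∈ Set.Icc (0 : ℝ) 1 := ⟨zero_le_one, le_refl 1⟩
  constructor
  · -- membership part: case split on signs
    rcases le_or_gt 0 fa with ha | ha
    · obtain ⟨ea, eb, ec⟩ := h1 ha
      exact ⟨ea ▸ one_mem, eb ▸ one_mem, ec ▸ one_mem⟩
    rcases le_or_gt 0 fb with hb | hb
    · obtain ⟨ea, eb, ec⟩ := h2 ha hb
      exact ⟨ea ▸ min_div_mem Γ fa hΓ, eb ▸ one_mem, ec ▸ one_mem⟩
    rcases le_or_gt 0 fc with hc | hc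
    · obtain ⟨ea, eb, ec⟩ := h3 hb hc
      exact ⟨ea ▸ min_div_mem Γ _ hΓ, eb ▸ min_div_mem Γ _ hΓ, ec ▸ one_mem⟩
    · obtain ⟨ea, eb, ec⟩ := h4 hc
      exact ⟨ea ▸ min_div_mem Γ _ hΓ, eb ▸ min_div_mem Γ _ hΓ,
        ec ▸ min_div_mem Γ _ hΓ⟩
  refine ⟨?_, ?_, ?_⟩
  · intro ha hb hle
    rw [(h2 ha hb).1, min_div_eq_one Γ fa ha.ne hle]
  · intro hb hc hle
    have hab' : fa + fb < 0 := by linarith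
    obtain ⟨ea, eb, _⟩ := h3 hb hc
    rw [ea, eb, min_div_eq_one Γ _ hab'.ne hle]
    exact ⟨rfl, rfl⟩
  · intro hc hle
    have h' : fa + fb + fc < 0 := by linarith
    obtain ⟨ea, eb, ec⟩ := h4 hc
    rw [ea, eb, ec, min_div_eq_one Γ _ h'.ne hle]
    exact ⟨rfl, rfl, rfl⟩
end
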